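/- arXiv:2301.01137 — 4 statements merged into one kernel-verified Lean document; each statement's English description precedes it below -/
import Mathlib

section
/- Zykov's theorem: for integers 2 ≤ s < t and n ≥ 1, the maximum number of copies of K_s in an n-vertex K_t-free graph is attained by the Turán graph T(n, t-1); in particular ex(n, K_s, K_t) = N(K_s, T(n, t-1)). -/
open SimpleGraph Finset

/-- The number of copies of `K_s` (i.e. `s`-cliques) in `G`. -/
noncomputable def cliqueCount {V : Type*} (G : SimpleGraph V) (s : ℕ) : ℕ :=
  Nat.card {t : Finset V // G.IsNClique s t}

section Aux
variable {V : Type*} {W : Type*}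

lemma isNClique_map' {G : SimpleGraph V} {H : SimpleGraph W} (f : V ↪ W)
    (hf : ∀ a b, G.Adj a b → H.Adj (f a) (f b)) {k : ℕ} {C : Finset V}
    (h : G.IsNClique k C) : H.IsNClique k (C.map f) := by
  constructor
  · intro x hx y hy hxy
    simp only [Finset.coe_map, Set.mem_image, Finset.mem_coe] at hx hy
    obtain ⟨a, ha, rfl⟩ := hx; obtain ⟨b, hb, rfl⟩ := hy
    exact hf a b (h.1 ha hb (fun h' => hxy (congrArg f h')))
  · rw [Finset.card_map]; exact h.2

lemma cliqueCount_le_of_hom [Finite W] {G : SimpleGraph V} {H : SimpleGraph W} (f : V ↪ W)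
    (hf : ∀ a b, G.Adj a b → H.Adj (f a) (f b)) (k : ℕ) :
    cliqueCount G k ≤ cliqueCount H k := by
  classical
  have : Finite (Finset W) := by cases nonempty_fintype W; infer_instance
  refine Nat.card_le_card_of_injective
    (fun C => (⟨C.1.map f, isNClique_map' f hf C.2⟩ : {t : Finset W // H.IsNClique k t})) ?_
  intro C D h
  exact Subtype.ext (Finset.map_injective f (congrArg Subtype.val h))

lemma cliqueCount_zero (G : SimpleGraph V) : cliqueCount G 0 = 1 := by
  have : Unique {t : Finset V // G.IsNClique 0 t} :=
    ⟨⟨⟨∅, by simp⟩⟩, fun a => Subtype.ext (by simpa [isNClique_zero] using a.2)⟩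
  simp [cliqueCount, Nat.card_unique]

lemma cliqueCount_one (G : SimpleGraph V) : cliqueCount G 1 = Nat.card V := by
  rw [cliqueCount]
  symm
  apply Nat.card_eq_of_bijective
    (fun v => (⟨{v}, by simp [isNClique_singleton]⟩ : {t : Finset V // G.IsNClique 1 t}))
  constructor
  · intro a b h
    simpa [Finset.singleton_inj] using congrArg Subtype.val h
  · rintro ⟨C, hC⟩
    obtain ⟨a, rfl⟩ := isNClique_one.1 hC
    exact ⟨a, rfl⟩

lemma subtype_map_back {A : Set V} [DecidablePred (· ∈ A)] (D : Finset ↥A) :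
    (D.map (Function.Embedding.subtype _)).subtype (· ∈ A) = D := by
  ext x
  simp only [Finset.mem_subtype, Finset.mem_map, Function.Embedding.coe_subtype]
  constructor
  · rintro ⟨y, hy, hxy⟩
    rwa [show y = x from Subtype.ext hxy] at hy
  · intro hx
    exact ⟨x, hx, rfl⟩

lemma isNClique_subtype_of {G : SimpleGraph V} {A : Set V} [DecidablePred (· ∈ A)] {k : ℕ}
    {C : Finset V} (h : G.IsNClique k C) (hA : ∀ x ∈ C, x ∈ A) :
    (G.induce A).IsNClique k (C.subtype (· ∈ A)) := by
  constructor
  · rintro ⟨x, hxA⟩ hx ⟨y, hyA⟩ hy hne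
    simp only [Finset.mem_coe, Finset.mem_subtype] at hx hy
    exact h.1 hx hy (by simpa [Subtype.ext_iff] using hne)
  · have h2 := congrArg Finset.card (Finset.subtype_map_of_mem hA)
    rwa [Finset.card_map, h.2] at h2

lemma cliqueCount_eq_card [Fintype V] (G : SimpleGraph V) (k : ℕ)
    [DecidablePred (G.IsNClique k ·)] :
    cliqueCount G k = #(univ.filter (G.IsNClique k ·)) := by
  rw [cliqueCount, Nat.card_eq_fintype_card]
  convert Fintype.card_subtype _

lemma cliqueCount_split [Fintype V] (G : SimpleGraph V) (v : V) (s : ℕ) :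
    cliqueCount G (s+1) =
      cliqueCount (G.induce {u | u ≠ v}) (s+1) + cliqueCount (G.induce (G.neighborSet v)) s := by
  classical
  rw [cliqueCount_eq_card, cliqueCount_eq_card, cliqueCount_eq_card]
  rw [← Finset.card_filter_add_card_filter_not
    (s := univ.filter (G.IsNClique (s+1) ·)) (p := fun C : Finset V => v ∉ C)]
  congr 1
  · -- cliques avoiding v ↔ cliques of the induced graph on {u | u ≠ v}
    apply Finset.card_nbij' (i := fun C => C.subtype (· ∈ ({u | u ≠ v} : Set V)))
      (j := fun D => D.map (Function.Embedding.subtype _))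
    · intro C hC
      simp only [Finset.mem_coe, Finset.mem_filter, Finset.mem_univ, true_and] at hC ⊢
      exact isNClique_subtype_of hC.1 (fun x hx h' => hC.2 (h' ▸ hx))
    · intro D hD
      simp only [Finset.mem_coe, Finset.mem_filter, Finset.mem_univ, true_and] at hD ⊢
      refine ⟨isNClique_map' _ (fun a b hab => hab) hD, ?_⟩
      intro hv
      obtain ⟨y, _, hy⟩ := Finset.mem_map.1 hv
      exact y.2 hy
    · intro C hC
      simp only [Finset.mem_coe, Finset.mem_filter, Finset.mem_univ, true_and] at hC
      exact Finset.subtype_map_of_mem (fun x hx h' => hC.2 (h' ▸ hx))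
    · intro D _
      exact subtype_map_back D
  · -- cliques containing v ↔ (s)-cliques of the induced graph on the neighborhood of v
    apply Finset.card_nbij' (i := fun C => (C.erase v).subtype (· ∈ G.neighborSet v))
      (j := fun D => insert v (D.map (Function.Embedding.subtype _)))
    · intro C hC
      simp only [Finset.mem_coe, Finset.mem_filter, Finset.mem_univ, true_and, not_not] at hC ⊢
      obtain ⟨hCl, hv⟩ := hC
      have herase : G.IsNClique s (C.erase v) := by
        constructor
        · exact hCl.1.subset (by simpa using Finset.erase_subset v C)
        · rw [Finset.card_erase_of_mem hv, hCl.2]; omega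
      exact isNClique_subtype_of herase (fun x hx => by
        obtain ⟨hxv, hxC⟩ := Finset.mem_erase.1 hx
        exact hCl.1 hv hxC (Ne.symm hxv))
    · intro D hD
      simp only [Finset.mem_coe, Finset.mem_filter, Finset.mem_univ, true_and, not_not] at hD ⊢
      have hbase : G.IsNClique s (D.map (Function.Embedding.subtype _)) :=
        isNClique_map' _ (fun a b hab => hab) hD
      refine ⟨hbase.insert (fun b hb => ?_), Finset.mem_insert_self _ _⟩
      obtain ⟨y, _, rfl⟩ := Finset.mem_map.1 hb
      exact y.2
    · intro C hC
      simp only [Finset.mem_coe, Finset.mem_filter, Finset.mem_univ, true_and, not_not] at hC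
      dsimp only
      rw [Finset.subtype_map_of_mem (fun x hx => by
        obtain ⟨hxv, hxC⟩ := Finset.mem_erase.1 hx
        exact hC.1.1 hC.2 hxC (Ne.symm hxv))]
      exact Finset.insert_erase hC.2
    · intro D _
      have hvD : v ∉ D.map (Function.Embedding.subtype (· ∈ G.neighborSet v)) := by
        intro hv
        obtain ⟨y, _, hy⟩ := Finset.mem_map.1 hv
        have hadj : G.Adj v ↑y := y.2
        rw [show (↑y : V) = v from hy] at hadj
        exact G.irrefl hadj
      dsimp only
      rw [Finset.erase_insert hvD, subtype_map_back]

lemma cliqueFree_induce {G : SimpleGraph V} {A : Set V} {k : ℕ} (h : G.CliqueFree k) :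
    (G.induce A).CliqueFree k := fun C hC =>
  h (C.map (Function.Embedding.subtype _)) (isNClique_map' _ (fun _ _ hab => hab) hC)

lemma cliqueFree_nbhd {G : SimpleGraph V} {v : V} {k : ℕ} (h : G.CliqueFree (k+1)) :
    (G.induce (G.neighborSet v)).CliqueFree k := by
  classical
  intro C hC
  have hbase := isNClique_map' (Function.Embedding.subtype _) (fun _ _ hab => hab) hC
  exact h _ (hbase.insert (fun b hb => by
    obtain ⟨y, _, rfl⟩ := Finset.mem_map.1 hb
    exact y.2))

lemma exists_small_degree [Fintype V] (G : SimpleGraph V) {r n : ℕ} (hr : 0 < r)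
    (hV : Fintype.card V = n) (hn1 : 0 < n) (hG : G.CliqueFree (r+1)) :
    ∃ v : V, Nat.card (G.neighborSet v) + ((n-1)/r + 1) ≤ n := by
  classical
  by_contra hcon
  push_neg at hcon
  set q := (n-1)/r with hq
  have hdeg : ∀ v : V, n ≤ Nat.card (G.neighborSet v) + q := fun v => by
    have := hcon v; omega
  have hcompl : ∀ v : V, #((G.neighborFinset v)ᶜ) ≤ q := by
    intro v
    rw [Finset.card_compl, hV]
    have h1 : #(G.neighborFinset v) = Nat.card (G.neighborSet v) := by
      rw [Nat.card_eq_fintype_card]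
      exact (card_neighborSet_eq_degree G v).symm
    have h2 : #(G.neighborFinset v) ≤ n := hV ▸ Finset.card_le_univ _
    have := hdeg v
    omega
  have claim : ∀ k : ℕ, k ≤ r + 1 → ∃ C : Finset V, G.IsNClique k C := by
    intro k
    induction k with
    | zero => exact fun _ => ⟨∅, by simp⟩
    | succ k ih =>
      intro hk
      obtain ⟨C, hC⟩ := ih (by omega)
      have hS : (univ.filter fun w => ∀ x ∈ C, G.Adj x w).Nonempty := by
        rw [← Finset.card_pos]
        have hsub : (univ.filter fun w => ¬ ∀ x ∈ C, G.Adj x w) ⊆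
            C.biUnion fun x => (G.neighborFinset x)ᶜ := by
          intro w hw
          simp only [Finset.mem_filter, Finset.mem_univ, true_and, not_forall] at hw
          obtain ⟨x, hx, hadj⟩ := hw
          exact Finset.mem_biUnion.2 ⟨x, hx, by simpa using hadj⟩
        have h1 : #(univ.filter fun w => ¬ ∀ x ∈ C, G.Adj x w) ≤ k * q := by
          calc #(univ.filter fun w => ¬ ∀ x ∈ C, G.Adj x w)
              ≤ #(C.biUnion fun x => (G.neighborFinset x)ᶜ) := Finset.card_le_card hsub
            _ ≤ ∑ x ∈ C, #((G.neighborFinset x)ᶜ) := Finset.card_biUnion_le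
            _ ≤ ∑ _x ∈ C, q := Finset.sum_le_sum (fun x _ => hcompl x)
            _ = k * q := by rw [Finset.sum_const, hC.2, smul_eq_mul]
        have h2 : #(univ.filter fun w => ∀ x ∈ C, G.Adj x w)
            + #(univ.filter fun w => ¬ ∀ x ∈ C, G.Adj x w) = n := by
          rw [Finset.card_filter_add_card_filter_not, Finset.card_univ, hV]
        have hq1 : k * q ≤ r * q := Nat.mul_le_mul_right q (by omega)
        have hq2 : q * r ≤ n - 1 := Nat.div_mul_le_self _ _
        have hq3 : q * r = r * q := Nat.mul_comm _ _
        omega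
      obtain ⟨w, hw⟩ := hS
      simp only [Finset.mem_filter, Finset.mem_univ, true_and] at hw
      exact ⟨insert w C, hC.insert (fun b hb => (hw b hb).symm)⟩
  obtain ⟨C, hC⟩ := claim (r+1) le_rfl
  exact hG C hC

lemma cliqueCount_eq_of_equiv [Finite V] [Finite W] {G : SimpleGraph V} {H : SimpleGraph W}
    (e : V ≃ W) (he : ∀ a b, G.Adj a b ↔ H.Adj (e a) (e b)) (k : ℕ) :
    cliqueCount G k = cliqueCount H k :=
  le_antisymm (cliqueCount_le_of_hom e.toEmbedding (fun a b hab => (he a b).1 hab) k)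
    (cliqueCount_le_of_hom e.symm.toEmbedding (fun a b hab => (he _ _).2 (by simpa using hab)) k)

lemma turan_mono {m n r : ℕ} (h : m ≤ n) (k : ℕ) :
    cliqueCount (turanGraph m r) k ≤ cliqueCount (turanGraph n r) k := by
  apply cliqueCount_le_of_hom (Fin.castLEEmb h)
  intro a b hab
  simpa [turanGraph] using hab

lemma le_turan_of_card_le [Fintype V] (G : SimpleGraph V) {n r k : ℕ}
    (hV : Fintype.card V = n) (hnr : n ≤ r) :
    cliqueCount G k ≤ cliqueCount (turanGraph n r) k := by
  have e : V ≃ Fin n := Fintype.equivFinOfCardEq hV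
  apply cliqueCount_le_of_hom e.toEmbedding
  intro a b hab
  show ((e a : Fin n) : ℕ) % r ≠ ((e b : Fin n) : ℕ) % r
  have ha : ((e a : Fin n) : ℕ) < r := lt_of_lt_of_le (e a).2 hnr
  have hb : ((e b : Fin n) : ℕ) < r := lt_of_lt_of_le (e b).2 hnr
  rw [Nat.mod_eq_of_lt ha, Nat.mod_eq_of_lt hb]
  exact fun h => hab.ne (e.injective (Fin.ext h))

lemma turan_delete_last {n r : ℕ} (hn : 0 < n) (k : ℕ) :
    cliqueCount ((turanGraph n r).induce
        {u | u ≠ (⟨n-1, Nat.sub_lt hn Nat.one_pos⟩ : Fin n)}) k =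
      cliqueCount (turanGraph (n-1) r) k := by
  refine (cliqueCount_eq_of_equiv ?_ ?_ k).symm
  · exact
    { toFun := fun y => ⟨⟨y.1, by omega⟩, fun h => by
        have : (y.1 : ℕ) = n - 1 := congrArg Fin.val h
        omega⟩
      invFun := fun x => ⟨x.1.1, by
        have h1 := x.1.2
        have h2 : ¬ (x.1.1 : ℕ) = n - 1 := fun h => x.2 (Fin.ext h)
        omega⟩
      left_inv := fun y => rfl
      right_inv := fun x => rfl }
  · intro a b
    exact Iff.rfl

/-- Auxiliary vertex map for embedding `T(m, r'+1)` into the neighborhood of the last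
vertex of `T(n, r'+2)`. -/
def tf (r' e x : ℕ) : ℕ :=
  (if x % (r'+1) < e then x % (r'+1) else x % (r'+1) + 1) + (x / (r'+1)) * (r'+2)

lemma tf_mod (r' e x : ℕ) :
    tf r' e x % (r'+2) = if x % (r'+1) < e then x % (r'+1) else x % (r'+1) + 1 := by
  rw [tf, Nat.add_mul_mod_self_right]
  apply Nat.mod_eq_of_lt
  have := Nat.mod_lt x (show 0 < r'+1 by omega)
  split <;> omega

lemma tf_ne (r' e x : ℕ) : tf r' e x % (r'+2) ≠ e := by
  rw [tf_mod r' e x]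
  split <;> omega

lemma tf_lt (r' e q x : ℕ) (he : e < r'+2) (hx : x < q * (r'+1) + e) :
    tf r' e x < (r'+2) * q + e + 1 := by
  set j := x % (r'+1) with hj
  set kk := x / (r'+1) with hk
  have hx' : (r'+1) * kk + j = x := Nat.div_add_mod x (r'+1)
  have hjlt : j < r'+1 := Nat.mod_lt x (by omega)
  have hkk : kk ≤ q := by
    by_contra hcon
    push_neg at hcon
    have h1 : (r'+1) * (q+1) ≤ (r'+1) * kk := Nat.mul_le_mul_left _ hcon
    have h2 : (r'+1) * (q+1) = q * (r'+1) + (r'+1) := by ring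
    linarith
  rcases Nat.lt_or_ge kk q with h | h
  · have h1 : kk * (r'+2) + (r'+2) ≤ q * (r'+2) := by
      have h3 := Nat.mul_le_mul_right (r'+2) (show kk + 1 ≤ q by omega)
      have h4 : (kk+1) * (r'+2) = kk * (r'+2) + (r'+2) := by ring
      linarith
    have h2 : q * (r'+2) = (r'+2) * q := by ring
    rw [tf, ← hj, ← hk]
    split <;> linarith
  · have hkq : kk = q := le_antisymm hkk h
    have hje : j < e := by
      by_contra hje
      push_neg at hje
      rw [hkq] at hx'
      have hc : (r'+1) * q = q * (r'+1) := by ring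
      linarith
    rw [tf, ← hj, ← hk, if_pos hje, hkq]
    have hc : q * (r'+2) = (r'+2) * q := by ring
    linarith

lemma tf_inj (r' e : ℕ) {x y : ℕ} (h : tf r' e x = tf r' e y) : x = y := by
  have hm := congrArg (· % (r'+2)) h
  simp only [tf_mod] at hm
  have hx' : (r'+1) * (x / (r'+1)) + x % (r'+1) = x := Nat.div_add_mod x (r'+1)
  have hy' : (r'+1) * (y / (r'+1)) + y % (r'+1) = y := Nat.div_add_mod y (r'+1)
  have hj : x % (r'+1) = y % (r'+1) := by
    rcases Nat.lt_or_ge (x % (r'+1)) e with h1 | h1 <;>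
      rcases Nat.lt_or_ge (y % (r'+1)) e with h2 | h2 <;>
      simp only [if_pos, if_neg, not_lt, h1, h2] at hm <;> omega
  simp only [tf] at h
  rw [hj] at h
  have h' := Nat.add_left_cancel h
  have hd := Nat.eq_of_mul_eq_mul_right (show 0 < r'+2 by omega) h'
  exact hx'.symm.trans (by rw [hd, hj]; exact hy')

lemma tf_adj (r' e : ℕ) {x y : ℕ} (h : x % (r'+1) ≠ y % (r'+1)) :
    tf r' e x % (r'+2) ≠ tf r' e y % (r'+2) := by
  rw [tf_mod, tf_mod]
  split <;> split <;> omega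

lemma turan_nbhd_ge {n r m : ℕ} (hn : 0 < n) (hr : 2 ≤ r)
    (hm : m + ((n-1)/r + 1) = n) (k : ℕ) :
    cliqueCount (turanGraph m (r-1)) k ≤
      cliqueCount ((turanGraph n r).induce
        ((turanGraph n r).neighborSet ⟨n-1, Nat.sub_lt hn Nat.one_pos⟩)) k := by
  obtain ⟨r', rfl⟩ : ∃ r', r = r' + 2 := ⟨r - 2, by omega⟩
  set q := (n-1)/(r'+2) with hq
  set e := (n-1) % (r'+2) with he
  have hqe : (r'+2) * q + e = n - 1 := Nat.div_add_mod _ _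
  have he2 : e < r' + 2 := Nat.mod_lt _ (by omega)
  have hm' : m = q * (r'+1) + e := by
    have h1 : (r'+2) * q = q * (r'+1) + q := by ring
    omega
  have hlt : ∀ x : Fin m, tf r' e x.1 < n := by
    intro x
    have h1 := tf_lt r' e q x.1 he2 (by omega)
    omega
  have hne' : ∀ x : Fin m, tf r' e x.1 % (r'+2) ≠ (n-1) % (r'+2) :=
    fun x => he ▸ tf_ne r' e x.1
  refine cliqueCount_le_of_hom
    ⟨fun x => ⟨⟨tf r' e x.1, hlt x⟩, fun h => (hne' x) h.symm⟩, ?_⟩ (fun a b hab => ?_) k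
  · intro a b hab
    have h1 : tf r' e a.1 = tf r' e b.1 := congrArg (fun z => z.1.1) hab
    exact Fin.ext (tf_inj r' e h1)
  · exact tf_adj r' e hab

lemma zykov_main : ∀ s r n : ℕ, ∀ (V : Type) [Fintype V], ∀ G : SimpleGraph V,
    s ≤ r → Fintype.card V = n → G.CliqueFree (r+1) →
    cliqueCount G s ≤ cliqueCount (turanGraph n r) s := by
  intro s
  induction s with
  | zero =>
    intro r n V _ G _ _ _
    rw [cliqueCount_zero, cliqueCount_zero]
  | succ s ihs =>
    intro r n
    induction n using Nat.strong_induction_on with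
    | _ n ihn =>
      intro V _ G hsr hV hG
      rcases le_or_gt n r with hnr | hnr
      · exact le_turan_of_card_le G hV hnr
      rcases Nat.eq_zero_or_pos s with rfl | hs
      · rw [cliqueCount_one, cliqueCount_one, Nat.card_eq_fintype_card,
          Nat.card_eq_fintype_card, hV, Fintype.card_fin]
      · classical
        have hr2 : 2 ≤ r := by omega
        have hn0 : 0 < n := by omega
        obtain ⟨v, hv⟩ := exists_small_degree G (show 0 < r by omega) hV (by omega) hG
        set m := n - ((n-1)/r + 1) with hmdef
        have hdle : (n-1)/r ≤ n - 1 := Nat.div_le_self _ _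
        have hm : m + ((n-1)/r + 1) = n := by omega
        rw [cliqueCount_split G v s]
        have h1 : cliqueCount (G.induce {u | u ≠ v}) (s+1) ≤
            cliqueCount (turanGraph (n-1) r) (s+1) := by
          apply ihn (n-1) (by omega) _ _ hsr ?_ (cliqueFree_induce hG)
          have hcard : Fintype.card ↥({u | u ≠ v} : Set V) = Fintype.card {x : V // ¬ x = v} :=
            Fintype.card_congr (Equiv.subtypeEquivRight (fun x => Iff.rfl))
          rw [hcard, Fintype.card_subtype_compl, Fintype.card_subtype_eq, hV]
        have h2 : cliqueCount (G.induce (G.neighborSet v)) s ≤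
            cliqueCount (turanGraph m (r-1)) s := by
          have hfree : (G.induce (G.neighborSet v)).CliqueFree ((r-1)+1) := by
            rw [Nat.sub_add_cancel (by omega : 1 ≤ r)]
            exact cliqueFree_nbhd hG
          refine le_trans
            (ihs (r-1) (Nat.card (G.neighborSet v)) ↥(G.neighborSet v)
              (G.induce (G.neighborSet v)) (by omega) Nat.card_eq_fintype_card.symm hfree)
            (turan_mono (by omega) s)
        have h3 : cliqueCount (turanGraph (n-1) r) (s+1) + cliqueCount (turanGraph m (r-1)) s
            ≤ cliqueCount (turanGraph n r) (s+1) := by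
          rw [cliqueCount_split (turanGraph n r) ⟨n-1, Nat.sub_lt hn0 Nat.one_pos⟩ s]
          exact Nat.add_le_add (le_of_eq (turan_delete_last hn0 (s+1)).symm)
            (turan_nbhd_ge hn0 hr2 hm s)
        exact le_trans (Nat.add_le_add h1 h2) h3

end Aux

/-- Zykov's theorem: for `2 ≤ s < t` and `n ≥ 1`, among `n`-vertex `K_t`-free graphs the
Turán graph `T(n, t-1)` has the maximum number of `s`-cliques; in particular
`ex(n, K_s, K_t) = N(K_s, T(n, t-1))`. -/
theorem stmt_6 (s t n : ℕ) (hs : 2 ≤ s) (hst : s < t) (hn : 1 ≤ n) :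
    IsGreatest {m | ∃ G : SimpleGraph (Fin n), G.CliqueFree t ∧ m = cliqueCount G s}
      (cliqueCount (turanGraph n (t - 1)) s) := by
  constructor
  · refine ⟨turanGraph n (t-1), ?_, rfl⟩
    have h := turanGraph_cliqueFree (n := n) (show 0 < t - 1 by omega)
    rwa [Nat.sub_add_cancel (by omega : 1 ≤ t)] at h
  · rintro m ⟨G, hG, rfl⟩
    have hG' : G.CliqueFree ((t-1)+1) := by
      rwa [Nat.sub_add_cancel (by omega : 1 ≤ t)]
    exact zykov_main s (t-1) n (Fin n) G (by omega) (Fintype.card_fin n) hG'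
end

section
/- The elementary symmetric polynomial e_k(a_1, …, a_r) with ∑ a_i = n fixed is maximized when the a_i are as equal as possible: if a_1 ≥ a_2 + 2 then replacing (a_1, a_2) by (a_1 − 1, a_2 + 1) does not decrease e_k, and strictly increases it when r ≥ k ≥ 2 and all other a_i ≥ 1. -/
/-- The `k`-th elementary symmetric polynomial of `a_1, …, a_r`. -/
def esymmNat {r : ℕ} (a : Fin r → ℕ) (k : ℕ) : ℕ :=
  ∑ S ∈ Finset.univ.powersetCard k, ∏ i ∈ S, a i

namespace Stmt14Aux

def E {r : ℕ} (s : Finset (Fin r)) (k : ℕ) (a : Fin r → ℕ) : ℕ :=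
  ∑ S ∈ s.powersetCard k, ∏ i ∈ S, a i

lemma E_zero {r : ℕ} (s : Finset (Fin r)) (a : Fin r → ℕ) : E s 0 a = 1 := by
  simp [E]

lemma E_insert {r : ℕ} {s : Finset (Fin r)} {i : Fin r} (hi : i ∉ s) (k : ℕ) (a : Fin r → ℕ) :
    E (insert i s) (k + 1) a = E s (k + 1) a + a i * E s k a := by
  have hdisj : Disjoint (Finset.powersetCard (k + 1) s) ((Finset.powersetCard k s).image (insert i)) := by
    rw [Finset.disjoint_left]
    intro T hT hT'
    obtain ⟨U, hU, rfl⟩ := Finset.mem_image.1 hT'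
    exact hi ((Finset.mem_powersetCard.1 hT).1 (Finset.mem_insert_self i U))
  have hinj : ∀ x ∈ Finset.powersetCard k s, ∀ y ∈ Finset.powersetCard k s,
      insert i x = insert i y → x = y := by
    intro x hx y hy h
    have hx' : i ∉ x := fun h' => hi ((Finset.mem_powersetCard.1 hx).1 h')
    have hy' : i ∉ y := fun h' => hi ((Finset.mem_powersetCard.1 hy).1 h')
    rw [← Finset.erase_insert hx', ← Finset.erase_insert hy', h]
  simp only [E]
  rw [Finset.powersetCard_succ_insert hi, Finset.sum_union hdisj, Finset.sum_image hinj,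
    Finset.mul_sum]
  congr 1
  refine Finset.sum_congr rfl fun T hT => ?_
  have hiT : i ∉ T := fun h => hi ((Finset.mem_powersetCard.1 hT).1 h)
  rw [Finset.prod_insert hiT]

lemma E_congr {r : ℕ} {s : Finset (Fin r)} {a b : Fin r → ℕ} (k : ℕ)
    (h : ∀ l ∈ s, a l = b l) : E s k a = E s k b := by
  refine Finset.sum_congr rfl fun T hT => Finset.prod_congr rfl fun l hl => ?_
  exact h l ((Finset.mem_powersetCard.1 hT).1 hl)

lemma E_pos {r : ℕ} {s : Finset (Fin r)} {a : Fin r → ℕ} {k : ℕ} (hk : k ≤ s.card)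
    (ha : ∀ l, 1 ≤ a l) : 1 ≤ E s k a := by
  obtain ⟨T, hT⟩ := Finset.powersetCard_nonempty.2 hk
  calc 1 ≤ ∏ i ∈ T, a i := Finset.one_le_prod' fun l _ => ha l
    _ ≤ E s k a := by
      rw [E]; exact Finset.single_le_sum (f := fun T => ∏ i ∈ T, a i) (fun t _ => Nat.zero_le _) hT

end Stmt14Aux

open Stmt14Aux in
/-- Balancing step: if `a i ≥ a j + 2`, replacing `(a i, a j)` by `(a i − 1, a j + 1)`
does not decrease `e_k`, and strictly increases it when `2 ≤ k ≤ r` and all entries are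
positive. -/
theorem stmt_14 {r : ℕ} (a : Fin r → ℕ) (k : ℕ) (i j : Fin r) (hij : i ≠ j)
    (hgap : a j + 2 ≤ a i) :
    esymmNat a k ≤ esymmNat (Function.update (Function.update a i (a i - 1)) j (a j + 1)) k ∧
    (2 ≤ k → k ≤ r → (∀ l, 1 ≤ a l) →
      esymmNat a k < esymmNat (Function.update (Function.update a i (a i - 1)) j (a j + 1)) k) := by
  set b := Function.update (Function.update a i (a i - 1)) j (a j + 1) with hb
  have hbi : b i = a i - 1 := by
    rw [hb, Function.update_of_ne hij, Function.update_self]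
  have hbj : b j = a j + 1 := by rw [hb, Function.update_self]
  set s0 : Finset (Fin r) := Finset.univ \ {i, j} with hs0
  have hjs0 : j ∉ s0 := by simp [hs0]
  have his0 : i ∉ insert j s0 := by simp [hs0, hij]
  have huniv : insert i (insert j s0) = Finset.univ := by
    ext l; by_cases hl1 : l = i <;> by_cases hl2 : l = j <;> simp [hs0, hl1, hl2]
  have hbs0 : ∀ l ∈ s0, a l = b l := by
    intro l hl
    simp only [hs0, Finset.mem_sdiff, Finset.mem_insert, Finset.mem_singleton] at hl
    rw [hb, Function.update_of_ne (by tauto), Function.update_of_ne (by tauto)]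
  have hE : ∀ t, E s0 t b = E s0 t a := fun t => (E_congr t hbs0).symm
  have hesymm : ∀ (c : Fin r → ℕ) (t : ℕ), esymmNat c t = E Finset.univ t c := fun _ _ => rfl
  obtain ⟨c, hc⟩ := Nat.exists_eq_add_of_le hgap
  -- a i = a j + 2 + c
  match k with
  | 0 =>
    constructor
    · simp [esymmNat]
    · omega
  | 1 =>
    have key : ∀ (c : Fin r → ℕ), esymmNat c 1 = E s0 1 c + c j * E s0 0 c + c i * E (insert j s0) 0 c := by
      intro c
      rw [hesymm, ← huniv, E_insert his0, E_insert hjs0]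
    constructor
    · rw [key a, key b, hbi, hbj, hE, hE, E_zero, E_zero, E_zero]
      omega
    · omega
  | (m + 2) =>
    have key : ∀ (c : Fin r → ℕ), esymmNat c (m + 2) =
        E s0 (m + 2) c + c j * E s0 (m + 1) c + c i * (E s0 (m + 1) c + c j * E s0 m c) := by
      intro c
      rw [hesymm, ← huniv, E_insert his0, E_insert hjs0, E_insert hjs0]
    rw [key a, key b, hbi, hbj, hE, hE, hE]
    rw [hc, show a j + 2 + c - 1 = a j + 1 + c from by omega]
    set P := E s0 m a
    set Q := E s0 (m + 1) a
    set R := E s0 (m + 2) a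
    constructor
    · nlinarith []
    · intro hk2 hkr ha
      have hcard : s0.card = r - 2 := by
        rw [hs0, Finset.card_sdiff_of_subset (by simp)]
        simp [Finset.card_insert_of_notMem, hij]
      have hP : 1 ≤ P := E_pos (by omega) ha
      nlinarith [hP]
end

section
/- Let F be a graph that is the disjoint union of s components each of chromatic number r+1 with a color-critical edge, plus components of chromatic number at most r. Then the graph K_{s-1} + T(n-s+1, r) is F-free for n sufficiently large. -/
open SimpleGraph

/-- `G` contains a copy of `F`. -/
def Contains {W V : Type*} (F : SimpleGraph W) (G : SimpleGraph V) : Prop :=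
  ∃ f : W ↪ V, ∀ a b, F.Adj a b → G.Adj (f a) (f b)

/-- The join `G + H` of two graphs. -/
def joinGraph {α β : Type*} (G : SimpleGraph α) (H : SimpleGraph β) :
    SimpleGraph (α ⊕ β) where
  Adj x y := match x, y with
    | .inl a, .inl a' => G.Adj a a'
    | .inr b, .inr b' => H.Adj b b'
    | _, _ => True
  symm := ⟨by rintro (a | b) (a' | b') h <;> simp_all [SimpleGraph.adj_comm]⟩
  loopless := ⟨by rintro (a | b) h <;> simp_all⟩

/-- If `F` is a disjoint union of `s` pieces of chromatic number `r+1`, each with a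
color-critical edge, together with pieces of chromatic number at most `r`, then
`K_{s-1} + T(n-s+1, r)` is `F`-free for all sufficiently large `n`. -/
theorem stmt_16 {V κ : Type*} [Fintype V] (F : SimpleGraph V) (r s : ℕ)
    (hr : 1 ≤ r) (hs : 1 ≤ s)
    (comp : V → Fin s ⊕ κ)
    (hcomp : ∀ u v, F.Adj u v → comp u = comp v)
    (hbig : ∀ i : Fin s,
      (F.induce {v | comp v = Sum.inl i}).chromaticNumber = (r + 1 : ℕ) ∧
      ∃ u v : V, comp u = Sum.inl i ∧ comp v = Sum.inl i ∧ F.Adj u v ∧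
        ((F.deleteEdges {s(u, v)}).induce
            {w | comp w = Sum.inl i}).chromaticNumber ≤ (r : ℕ))
    (hsmall : ∀ j : κ,
      (F.induce {v | comp v = Sum.inr j}).chromaticNumber ≤ (r : ℕ)) :
    ∃ N : ℕ, ∀ n ≥ N,
      ¬ Contains F (joinGraph (⊤ : SimpleGraph (Fin (s - 1)))
          (turanGraph (n - s + 1) r)) := by
  refine ⟨0, fun n _ => ?_⟩
  rintro ⟨f, hf⟩
  -- Every big component must hit an apex vertex
  have key : ∀ i : Fin s, ∃ v : V, comp v = Sum.inl i ∧ ∃ a, f v = Sum.inl a := by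
    intro i
    by_contra hcon
    push_neg at hcon
    -- then all vertices of component i map into the Turan part
    have hall : ∀ v : V, comp v = Sum.inl i → ∃ b, f v = Sum.inr b := by
      intro v hv
      cases h : f v with
      | inl a => exact absurd h (hcon v hv a)
      | inr b => exact ⟨b, rfl⟩
    -- giving an r-coloring of the component
    have C : (F.induce {v | comp v = Sum.inl i}).Coloring (Fin r) := by
      refine SimpleGraph.Coloring.mk
        (fun v => ⟨(hall v.1 v.2).choose % r, Nat.mod_lt _ hr⟩) ?_
      rintro ⟨u, hu⟩ ⟨w, hw⟩ hadj
      have hadj' : F.Adj u w := hadj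
      have hG := hf u w hadj'
      have hu' := (hall u hu).choose_spec
      have hw' := (hall w hw).choose_spec
      rw [hu', hw'] at hG
      have : ((hall u hu).choose : ℕ) % r ≠ ((hall w hw).choose : ℕ) % r := hG
      exact fun h => this (by simpa using congrArg Fin.val h)
    have hle : (F.induce {v | comp v = Sum.inl i}).chromaticNumber ≤ (r : ℕ) := by
      simpa using C.colorable.chromaticNumber_le
    rw [(hbig i).1] at hle
    have : r + 1 ≤ r := by exact_mod_cast hle
    omega
  -- choose for each i a vertex and its apex image
  choose v hv a ha using key
  have hainj : Function.Injective a := by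
    intro i j hij
    have : f (v i) = f (v j) := by rw [ha i, ha j, hij]
    have hvij : v i = v j := f.injective this
    have : Sum.inl (α := Fin s) (β := κ) i = Sum.inl j := by
      rw [← hv i, ← hv j, hvij]
    exact Sum.inl.injEq _ _ ▸ this
  have hcard := Fintype.card_le_of_injective a hainj
  simp only [Fintype.card_fin] at hcard
  omega
end

section
/- If G is a graph with n vertices in which every vertex has degree less than ε·n in its own part A_i of an r-partition and is adjacent to at least |A_j| − δ·n vertices of every other part A_j, and u, v lie in parts so that they have at least c·n common neighbors outside B in each of k−2 specified parts (with all parts of size at least n/(2r), and c > (k−2)δ), then u and v together with k−2 greedily chosen common neighbors, one from each of the k−2 parts, form a k-clique, provided n is large enough that c·n − (k−2)·δ·n > 0. -/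
/-- Greedy clique completion: `u, v` are adjacent, each target set `A i` contains at least
`c·n` common neighbors of `u` and `v`, every vertex of every target set is non-adjacent to
at most `δ·n` vertices of each target set, and `c > m·δ`.  Then one can choose a vertex
from each target set so that together with `u` and `v` they form a clique. -/
theorem stmt_17 {V : Type*} [Fintype V] [DecidableEq V]
    (G : SimpleGraph V) [DecidableRel G.Adj] (u v : V) (huv : G.Adj u v)
    (m : ℕ) (A : Fin m → Finset V) (n : ℕ) (hn : 0 < n) (c δ : ℝ) (hδ : 0 ≤ δ)
    (hc : (m : ℝ) * δ < c)
    (hsize : ∀ i, c * n ≤ (((A i).filter (fun x => G.Adj u x ∧ G.Adj v x)).card : ℝ))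
    (hmiss : ∀ j : Fin m, ∀ w ∈ A j, ∀ i : Fin m,
      (((A i).filter (fun x => ¬ G.Adj w x)).card : ℝ) ≤ δ * n) :
    ∃ x : Fin m → V, (∀ i, x i ∈ A i) ∧
      (∀ i, G.Adj u (x i) ∧ G.Adj v (x i)) ∧
      (∀ i j, i ≠ j → G.Adj (x i) (x j)) := by
  have hc0 : 0 < c := lt_of_le_of_lt (by positivity) hc
  -- main induction
  have key : ∀ k : ℕ, k ≤ m → ∃ x : Fin m → V, ∀ i : Fin m, (i : ℕ) < k →
      x i ∈ A i ∧ G.Adj u (x i) ∧ G.Adj v (x i) ∧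
      ∀ j : Fin m, (j : ℕ) < (i : ℕ) → G.Adj (x j) (x i) := by
    intro k
    induction k with
    | zero =>
      intro _
      rcases Nat.eq_zero_or_pos m with hm | hm
      · subst hm; exact ⟨Fin.elim0, fun i => i.elim0⟩
      · have h0 := hsize ⟨0, hm⟩
        have : 0 < (((A ⟨0, hm⟩).filter (fun x => G.Adj u x ∧ G.Adj v x)).card : ℝ) :=
          lt_of_lt_of_le (by positivity) h0
        have : ((A ⟨0, hm⟩).filter (fun x => G.Adj u x ∧ G.Adj v x)).Nonempty := by
          rw [← Finset.card_pos]; exact_mod_cast this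
        obtain ⟨w, _⟩ := this
        exact ⟨fun _ => w, fun i hi => absurd hi (Nat.not_lt_zero _)⟩
    | succ k ih =>
      intro hk
      obtain ⟨x, hx⟩ := ih (Nat.le_of_succ_le hk)
      have hkm : k < m := hk
      set K : Fin m := ⟨k, hkm⟩
      set base := (A K).filter (fun w => G.Adj u w ∧ G.Adj v w) with hbase
      set B := (Finset.univ.filter (fun j : Fin m => (j : ℕ) < k)).biUnion
        (fun j => (A K).filter (fun w => ¬ G.Adj (x j) w)) with hB
      -- card of B is small
      have hBcard : (B.card : ℝ) ≤ (k : ℝ) * (δ * n) := by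
        calc (B.card : ℝ)
            ≤ ∑ j ∈ Finset.univ.filter (fun j : Fin m => (j : ℕ) < k),
                (((A K).filter (fun w => ¬ G.Adj (x j) w)).card : ℝ) := by
              exact_mod_cast Finset.card_biUnion_le
          _ ≤ ∑ j ∈ Finset.univ.filter (fun j : Fin m => (j : ℕ) < k), (δ * n) := by
              apply Finset.sum_le_sum
              intro j hj
              have hjk : (j : ℕ) < k := (Finset.mem_filter.mp hj).2
              exact hmiss j (x j) (hx j hjk).1 K
          _ = ((Finset.univ.filter (fun j : Fin m => (j : ℕ) < k)).card : ℝ) * (δ * n) := by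
              rw [Finset.sum_const, nsmul_eq_mul]
          _ ≤ (k : ℝ) * (δ * n) := by
              apply mul_le_mul_of_nonneg_right _ (by positivity)
              have h2 : (Finset.univ.filter (fun j : Fin m => (j : ℕ) < k)).card ≤
                  (Finset.range k).card :=
                Finset.card_le_card_of_injOn (fun j : Fin m => (j : ℕ))
                  (fun j hj => Finset.mem_range.mpr (Finset.mem_filter.mp hj).2)
                  (fun a _ b _ h => Fin.ext h)
              rw [Finset.card_range] at h2
              exact_mod_cast h2
      have hBlt : (B.card : ℝ) < (base.card : ℝ) := by
        have h1 : (k : ℝ) * δ < c := by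
          calc (k : ℝ) * δ ≤ (m : ℝ) * δ := by
                apply mul_le_mul_of_nonneg_right _ hδ
                exact_mod_cast hkm.le
            _ < c := hc
        calc (B.card : ℝ) ≤ (k : ℝ) * (δ * n) := hBcard
          _ = ((k : ℝ) * δ) * n := by ring
          _ < c * n := by
              apply mul_lt_mul_of_pos_right h1 (by exact_mod_cast hn)
          _ ≤ (base.card : ℝ) := hsize K
      have hne : (base \ B).Nonempty := by
        rw [← Finset.card_pos]
        have h1 : B.card < base.card := by exact_mod_cast hBlt
        have h2 := Finset.card_le_card_sdiff_add_card (s := base) (t := B)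
        omega
      obtain ⟨w, hw⟩ := hne
      have hwbase : w ∈ base := (Finset.mem_sdiff.mp hw).1
      have hwB : w ∉ B := (Finset.mem_sdiff.mp hw).2
      have hwA : w ∈ A K := (Finset.mem_filter.mp hwbase).1
      have hwuv : G.Adj u w ∧ G.Adj v w := (Finset.mem_filter.mp hwbase).2
      have hwadj : ∀ j : Fin m, (j : ℕ) < k → G.Adj (x j) w := by
        intro j hj
        by_contra hcon
        exact hwB (Finset.mem_biUnion.mpr ⟨j, Finset.mem_filter.mpr ⟨Finset.mem_univ _, hj⟩,
          Finset.mem_filter.mpr ⟨hwA, hcon⟩⟩)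
      refine ⟨Function.update x K w, ?_⟩
      intro i hi
      rcases Nat.lt_succ_iff_lt_or_eq.mp hi with hik | hik
      · have hiK : i ≠ K := by intro h; rw [h] at hik; exact absurd hik (lt_irrefl _)
        rw [Function.update_of_ne hiK]
        obtain ⟨h1, h2, h3, h4⟩ := hx i hik
        refine ⟨h1, h2, h3, ?_⟩
        intro j hj
        have hjK : j ≠ K := by
          intro h; rw [h] at hj; exact absurd (hj.trans hik) (lt_irrefl _)
        rw [Function.update_of_ne hjK]
        exact h4 j hj
      · have hiK : i = K := Fin.ext hik
        subst hiK
        rw [Function.update_self]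
        refine ⟨hwA, hwuv.1, hwuv.2, ?_⟩
        intro j hj
        have hjk : (j : ℕ) < k := hj
        have hjK : j ≠ K := by
          intro h; rw [h] at hjk; exact absurd hjk (lt_irrefl _)
        rw [Function.update_of_ne hjK]
        exact hwadj j hjk
  obtain ⟨x, hx⟩ := key m le_rfl
  refine ⟨x, fun i => (hx i i.isLt).1, fun i => ⟨(hx i i.isLt).2.1, (hx i i.isLt).2.2.1⟩, ?_⟩
  intro i j hij
  rcases lt_or_gt_of_ne hij with h | h
  · exact (hx j j.isLt).2.2.2 i h
  · exact ((hx i i.isLt).2.2.2 j h).symm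
end
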